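/- Let Σ be a signature, V a set of variables and κ > 0 a cardinal, with V ∪ Σ₀ ≠ ∅. Every submultialgebra 𝒜 of mT(Σ, V, κ) is cdf-generated by its ground G(𝒜). -/

import Mathlib

universe u

/-- A `Σ`-multialgebra over the signature `S` (a family of sets of `n`-ary
function symbols) with universe `A`: each symbol is interpreted as a
multioperation returning a non-empty set of values. -/
structure MultiAlg (S : ℕ → Type u) (A : Type u) where
  op : ∀ {n : ℕ}, S n → (Fin n → A) → Set A
  op_nonempty : ∀ {n : ℕ} (σ : S n) (as : Fin n → A), (op σ as).Nonempty

namespace MultiAlg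

variable {S : ℕ → Type u} {A B : Type u}

/-- The build of a multialgebra: the union of all outputs of multioperations. -/
def build (M : MultiAlg S A) : Set A :=
  {a | ∃ (n : ℕ) (σ : S n) (as : Fin n → A), a ∈ M.op σ as}

/-- The ground of a multialgebra: its universe minus its build. -/
def ground (M : MultiAlg S A) : Set A := (M.build)ᶜ

/-- Homomorphisms of multialgebras. -/
def IsHom (M : MultiAlg S A) (N : MultiAlg S B) (f : A → B) : Prop :=
  ∀ {n : ℕ} (σ : S n) (as : Fin n → A), f '' M.op σ as ⊆ N.op σ (fun i => f (as i))

/-- Full homomorphisms of multialgebras. -/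
def IsFullHom (M : MultiAlg S A) (N : MultiAlg S B) (f : A → B) : Prop :=
  ∀ {n : ℕ} (σ : S n) (as : Fin n → A), f '' M.op σ as = N.op σ (fun i => f (as i))

/-- An isomorphism is a bijective full homomorphism. -/
def IsIso (M : MultiAlg S A) (N : MultiAlg S B) (f : A → B) : Prop :=
  IsFullHom M N f ∧ Function.Bijective f

/-- `N`, a multialgebra structure on the subset `Bc ⊆ A`, is a submultialgebra
of `M` if each of its multioperations is contained in the corresponding one of `M`. -/
def IsSubMultiAlg (M : MultiAlg S A) {Bc : Set A} (N : MultiAlg S ↥Bc) : Prop :=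
  ∀ {n : ℕ} (σ : S n) (bs : Fin n → ↥Bc),
    Subtype.val '' N.op σ bs ⊆ M.op σ (fun i => (bs i : A))

/-- The increasing family `⟨X⟩ₘ` of subsets generated by `X` in `M`. -/
def genFrom (M : MultiAlg S A) (X : Set A) : ℕ → Set A
  | 0 => X ∪ {a | ∃ σ : S 0, a ∈ M.op σ Fin.elim0}
  | m + 1 => genFrom M X m ∪
      {a | ∃ (n : ℕ) (σ : S n) (as : Fin n → A),
        (∀ i, as i ∈ genFrom M X m) ∧ a ∈ M.op σ as}

/-- The set `⟨X⟩` generated by `X` in `M`. -/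
def gen (M : MultiAlg S A) (X : Set A) : Set A := ⋃ m, M.genFrom X m

/-- `M` is generated by `X` if `⟨X⟩` is the whole universe. -/
def GeneratedBy (M : MultiAlg S A) (X : Set A) : Prop := M.gen X = Set.univ

/-- A multialgebra is disconnected when distinct multioperation instances
have disjoint outputs. -/
def Disconnected (M : MultiAlg S A) : Prop :=
  ∀ {n m : ℕ} (σ : S n) (θ : S m) (as : Fin n → A) (bs : Fin m → A),
    (M.op σ as ∩ M.op θ bs).Nonempty → n = m ∧ HEq σ θ ∧ HEq as bs

/-- A collection of choices from `M` to `N`: for every symbol `σ`, inputs in `A`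
and inputs in `B`, a function from `σ_M(as)` to `σ_N(bs)`. -/
structure ChoiceCol (M : MultiAlg S A) (N : MultiAlg S B) where
  choice : ∀ {n : ℕ} (σ : S n) (as : Fin n → A) (bs : Fin n → B),
    {a // a ∈ M.op σ as} → {b // b ∈ N.op σ bs}

/-- `M` is choice-dependent freely (cdf-) generated by `X ⊆ A`: for every
multialgebra `N`, function `f : X → B` and collection of choices `C`, there is
a unique homomorphism extending `f` and compatible with `C`. -/
def IsCdfGenerated (M : MultiAlg S A) (X : Set A) : Prop :=
  ∀ (B : Type u) [Nonempty B] (N : MultiAlg S B) (f : ↥X → B) (C : ChoiceCol M N),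
    ∃! g : A → B, IsHom M N g ∧ (∀ x : ↥X, g x = f x) ∧
      ∀ {n : ℕ} (σ : S n) (as : Fin n → A) (a : A) (ha : a ∈ M.op σ as),
        g a = (C.choice σ as (fun i => g (as i)) ⟨a, ha⟩).1

/-- A strong basis of `M` is a minimum generating set. -/
def IsStrongBasis (M : MultiAlg S A) (Bs : Set A) : Prop :=
  M.GeneratedBy Bs ∧ ∀ S' : Set A, M.GeneratedBy S' → Bs ⊆ S'

/-- A chain in `M`: a sequence in which each element belongs to the output of a
multioperation (of positive arity) having the next element among its inputs. -/
def IsChainSeq (M : MultiAlg S A) (a : ℕ → A) : Prop :=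
  ∀ k : ℕ, ∃ (m : ℕ) (σ : S (m + 1)) (cs : Fin (m + 1) → A) (j : Fin (m + 1)),
    cs j = a (k + 1) ∧ a k ∈ M.op σ cs

/-- A multialgebra is chainless when it has no chains. -/
def Chainless (M : MultiAlg S A) : Prop := ¬ ∃ a : ℕ → A, M.IsChainSeq a

/-- `M` satisfies the universal mapping property for the class of all
`Σ`-multialgebras over `X ⊆ A`. -/
def HasUMP (M : MultiAlg S A) (X : Set A) : Prop :=
  ∀ (B : Type u) [Nonempty B] (N : MultiAlg S B) (f : ↥X → B),
    ∃! g : A → B, IsHom M N g ∧ ∀ x : ↥X, g x = f x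

end MultiAlg

/-- Absolutely free terms over the signature `S` with variables `V`. -/
inductive MTerm (S : ℕ → Type u) (V : Type u) : Type u
  | var : V → MTerm S V
  | node : {n : ℕ} → S n → (Fin n → MTerm S V) → MTerm S V

/-- The expanded signature `Σ^κ`, with `Σₙ^κ = Σₙ × κ`. -/
def expSig (S : ℕ → Type u) (K : Type u) : ℕ → Type u := fun n => S n × K

/-- The `κ`-branching multialgebra of non-deterministic terms `mT(Σ, V, κ)`:
its universe is `T(Σ^κ, V)` and `σ(α₁,…,αₙ) = {σ^β α₁⋯αₙ : β ∈ κ}`. -/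
def mT (S : ℕ → Type u) (V : Type u) (K : Type u) [Nonempty K] :
    MultiAlg S (MTerm (expSig S K) V) where
  op {_} σ αs := {t | ∃ β : K, t = MTerm.node (σ, β) αs}
  op_nonempty {_} σ αs :=
    ⟨MTerm.node (σ, Classical.arbitrary K) αs, Classical.arbitrary K, rfl⟩

namespace Stmt4Aux

open MultiAlg

/-- depth of a term -/
def mdepth {S : ℕ → Type u} {V : Type u} : MTerm S V → ℕ
  | .var _ => 0
  | .node (n := n) _ ts => (Finset.univ.sup fun i : Fin n => mdepth (ts i)) + 1

variable {S : ℕ → Type u} {V K : Type u} [Nonempty K]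
variable {Bc : Set (MTerm (expSig S K) V)}

section

variable {N : MultiAlg S ↥Bc}

lemma node_form (hsub : MultiAlg.IsSubMultiAlg (mT S V K) N) {n : ℕ} (σ : S n) (as : Fin n → ↥Bc) (a : ↥Bc)
    (ha : a ∈ N.op σ as) : ∃ β : K, (a : MTerm (expSig S K) V) =
      MTerm.node (σ, β) (fun i => (as i : MTerm (expSig S K) V)) := by
  have := hsub σ as ⟨a, ha, rfl⟩
  exact this

lemma depth_lt (hsub : MultiAlg.IsSubMultiAlg (mT S V K) N) {n : ℕ} (σ : S n) (as : Fin n → ↥Bc) (a : ↥Bc)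
    (ha : a ∈ N.op σ as) (i : Fin n) :
    mdepth (as i : MTerm (expSig S K) V) < mdepth (a : MTerm (expSig S K) V) := by
  obtain ⟨β, hβ⟩ := node_form hsub σ as a ha
  rw [hβ]
  show _ < _ + 1
  exact Nat.lt_succ_of_le (Finset.le_sup
    (f := fun j => mdepth ((as j : MTerm (expSig S K) V))) (Finset.mem_univ i))

lemma decomp_unique (hsub : MultiAlg.IsSubMultiAlg (mT S V K) N) {n m : ℕ} (σ : S n) (θ : S m) (as : Fin n → ↥Bc)
    (bs : Fin m → ↥Bc) (a : ↥Bc) (ha : a ∈ N.op σ as) (hb : a ∈ N.op θ bs) :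
    n = m ∧ HEq σ θ ∧ HEq as bs := by
  obtain ⟨β, hβ⟩ := node_form hsub σ as a ha
  obtain ⟨γ, hγ⟩ := node_form hsub θ bs a hb
  rw [hβ] at hγ
  injection hγ with h1 h2 h3
  subst h1
  refine ⟨rfl, ?_, ?_⟩
  · have := eq_of_heq h2
    have : σ = θ := congrArg Prod.fst this
    exact heq_of_eq this
  · have h3' := eq_of_heq h3
    have : as = bs := by
      funext i
      apply Subtype.ext
      exact congrFun h3' i
    exact heq_of_eq this

end

variable {B : Type u}

open Classical in
noncomputable def gfun (N : MultiAlg S ↥Bc) (hsub : MultiAlg.IsSubMultiAlg (mT S V K) N)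
    (N' : MultiAlg S B) (f : ↥N.ground → B) (C : ChoiceCol N N') (a : ↥Bc) : B :=
  if h : ∃ (n : ℕ) (σ : S n) (as : Fin n → ↥Bc), a ∈ N.op σ as then
    (C.choice h.choose_spec.choose h.choose_spec.choose_spec.choose
      (fun i => gfun N hsub N' f C (h.choose_spec.choose_spec.choose i))
      ⟨a, h.choose_spec.choose_spec.choose_spec⟩).1
  else f ⟨a, h⟩
termination_by mdepth (a : MTerm (expSig S K) V)
decreasing_by
  all_goals exact depth_lt hsub h.choose_spec.choose h.choose_spec.choose_spec.choose a h.choose_spec.choose_spec.choose_spec i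

end Stmt4Aux

namespace Stmt4Aux

open MultiAlg

variable {S : ℕ → Type u} {V K : Type u} [Nonempty K]
variable {Bc : Set (MTerm (expSig S K) V)} {B : Type u}
variable {N : MultiAlg S ↥Bc} (hsub : MultiAlg.IsSubMultiAlg (mT S V K) N)
variable (N' : MultiAlg S B) (f : ↥N.ground → B) (C : ChoiceCol N N')

lemma gfun_ground (a : ↥Bc) (ha : a ∈ N.ground) :
    gfun N hsub N' f C a = f ⟨a, ha⟩ := by
  refine (gfun.eq_1 ..).trans ?_
  have h : ¬ ∃ (n : ℕ) (σ : S n) (as : Fin n → ↥Bc), a ∈ N.op σ as := ha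
  rw [dif_neg h]

lemma gfun_choice {n : ℕ} (σ : S n) (as : Fin n → ↥Bc) (a : ↥Bc)
    (ha : a ∈ N.op σ as) :
    gfun N hsub N' f C a =
      (C.choice σ as (fun i => gfun N hsub N' f C (as i)) ⟨a, ha⟩).1 := by
  refine (gfun.eq_1 ..).trans ?_
  have h : ∃ (n : ℕ) (σ : S n) (as : Fin n → ↥Bc), a ∈ N.op σ as := ⟨n, σ, as, ha⟩
  rw [dif_pos h]
  obtain ⟨hn, hσ, has⟩ := decomp_unique hsub h.choose_spec.choose σ
    h.choose_spec.choose_spec.choose as a h.choose_spec.choose_spec.choose_spec ha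
  subst hn
  have hσ' := eq_of_heq hσ
  have has' := eq_of_heq has
  subst hσ'
  subst has'
  rfl

end Stmt4Aux
/-- Every submultialgebra `𝒜` of `mT(Σ, V, κ)` is cdf-generated by
its ground `G(𝒜)`. -/
theorem stmt4 (S : ℕ → Type u) (V K : Type u) [Nonempty K]
    (hVS : Nonempty V ∨ Nonempty (S 0))
    {Bc : Set (MTerm (expSig S K) V)} (hBc : Bc.Nonempty)
    (N : MultiAlg S ↥Bc) (hsub : MultiAlg.IsSubMultiAlg (mT S V K) N) :
    N.IsCdfGenerated N.ground := by
  intro B _ N' f C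
  refine ⟨Stmt4Aux.gfun N hsub N' f C, ⟨?_, ?_, ?_⟩, ?_⟩
  · -- homomorphism
    intro n σ as
    rintro b ⟨a, ha, rfl⟩
    rw [Stmt4Aux.gfun_choice hsub N' f C σ as a ha]
    exact (C.choice σ as _ ⟨a, ha⟩).2
  · intro x
    rw [show (x : ↥Bc) = (⟨(x : ↥Bc), x.2⟩ : ↥N.ground).1 from rfl,
      Stmt4Aux.gfun_ground hsub N' f C (x : ↥Bc) x.2]
  · intro n σ as a ha
    exact Stmt4Aux.gfun_choice hsub N' f C σ as a ha
  · rintro g ⟨_, hg2, hg3⟩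
    have key : ∀ (d : ℕ) (a : ↥Bc), Stmt4Aux.mdepth (a : MTerm (expSig S K) V) < d →
        g a = Stmt4Aux.gfun N hsub N' f C a := by
      intro d
      induction d with
      | zero => intro a h; omega
      | succ d ih =>
        intro a hd
        by_cases h : ∃ (n : ℕ) (σ : S n) (as : Fin n → ↥Bc), a ∈ N.op σ as
        · obtain ⟨n, σ, as, ha⟩ := h
          rw [hg3 σ as a ha, Stmt4Aux.gfun_choice hsub N' f C σ as a ha]
          have heq : (fun i => g (as i)) = fun i => Stmt4Aux.gfun N hsub N' f C (as i) := by
            funext i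
            exact ih (as i) (by
              have := Stmt4Aux.depth_lt hsub σ as a ha i; omega)
          rw [heq]
        · have ha : a ∈ N.ground := h
          rw [show a = (⟨a, ha⟩ : ↥N.ground).1 from rfl, hg2 ⟨a, ha⟩,
            Stmt4Aux.gfun_ground hsub N' f C a ha]
    funext a
    exact key (Stmt4Aux.mdepth (a : MTerm (expSig S K) V) + 1) a (by omega)
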